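/- arXiv:1209.4985 — 2 statements merged into one kernel-verified Lean document; each statement's English description precedes it below -/
import Mathlib

section
/- Let k, n ∈ ℕ with k ≥ 2, let I and J be disjoint subsets of {0,…,n−1}, let A ⊆ [k]^n and let 0 < ε < k^{−|I|}. If e_{I∪J}(A) − e_J(A) ≤ ε^4, then dens( { z ∈ [k]^J : |dens(A_{(y,z)}) − dens(A_z)| ≤ ε for every y ∈ [k]^I } ) ≥ 1 − ε. -/
/-!
`[k]^n` is identified with the set of functions `Fin n → Fin k`; for `I : Finset (Fin n)`,
a located word `y ∈ [k]^I` is a function `{i // i ∈ I} → Fin k`.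
-/

/-- `dens(A_y)`: the density, in `[k]^{{0,…,n-1} ∖ I}`, of the section of `A` at
`y ∈ [k]^I`, i.e. `|{x ∈ A : x ∣_I = y}| / k^{n-|I|}`. -/
noncomputable def secDens (k n : ℕ) (A : Set (Fin n → Fin k)) (I : Finset (Fin n))
    (y : {i : Fin n // i ∈ I} → Fin k) : ℝ :=
  (Set.ncard {x ∈ A | ∀ i : {i : Fin n // i ∈ I}, x i.1 = y i} : ℝ) /
    (k : ℝ) ^ (n - I.card)

/-- `dens(A_{(y,z)})`: the density, in `[k]^M` with `M = {0,…,n-1} ∖ (I ∪ J)`, of the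
section of `A` at the pair `(y, z) ∈ [k]^I × [k]^J`. -/
noncomputable def secDens₂ (k n : ℕ) (A : Set (Fin n → Fin k)) (I J : Finset (Fin n))
    (y : {i : Fin n // i ∈ I} → Fin k) (z : {j : Fin n // j ∈ J} → Fin k) : ℝ :=
  (Set.ncard {x ∈ A | (∀ i : {i : Fin n // i ∈ I}, x i.1 = y i) ∧
      ∀ j : {j : Fin n // j ∈ J}, x j.1 = z j} : ℝ) /
    (k : ℝ) ^ (n - I.card - J.card)

/-- The energy `e_I(A) = avg_{y ∈ [k]^I} dens(A_y)²`. -/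
noncomputable def energy (k n : ℕ) (A : Set (Fin n → Fin k)) (I : Finset (Fin n)) : ℝ :=
  (∑ y : ({i : Fin n // i ∈ I} → Fin k), (secDens k n A I y) ^ 2) / (k : ℝ) ^ I.card


open Finset
open scoped Classical

lemma ncard_count (k n : ℕ) (A : Set (Fin n → Fin k)) (I J : Finset (Fin n))
    (z : {j : Fin n // j ∈ J} → Fin k) :
    ∑ y : ({i : Fin n // i ∈ I} → Fin k),
      Set.ncard {x ∈ A | (∀ i : {i : Fin n // i ∈ I}, x i.1 = y i) ∧
        ∀ j : {j : Fin n // j ∈ J}, x j.1 = z j}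
      = Set.ncard {x ∈ A | ∀ j : {j : Fin n // j ∈ J}, x j.1 = z j} := by
  set sz : Finset (Fin n → Fin k) :=
    univ.filter (fun x => x ∈ A ∧ ∀ j : {j : Fin n // j ∈ J}, x j.1 = z j) with hsz
  have h1 : Set.ncard {x ∈ A | ∀ j : {j : Fin n // j ∈ J}, x j.1 = z j} = sz.card := by
    rw [← Set.ncard_coe_finset]
    congr 1
    ext x
    simp [hsz, Set.mem_setOf_eq]
    try tauto
  have h2 : ∀ y : ({i : Fin n // i ∈ I} → Fin k),
      Set.ncard {x ∈ A | (∀ i : {i : Fin n // i ∈ I}, x i.1 = y i) ∧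
        ∀ j : {j : Fin n // j ∈ J}, x j.1 = z j}
      = (sz.filter (fun x => (fun i : {i : Fin n // i ∈ I} => x i.1) = y)).card := by
    intro y
    rw [← Set.ncard_coe_finset]
    congr 1
    ext x
    simp [hsz, Set.mem_setOf_eq, funext_iff]
    try tauto
  rw [h1, Finset.card_eq_sum_card_fiberwise
    (f := fun x (i : {i : Fin n // i ∈ I}) => x i.1) (t := univ) (fun x _ => mem_univ _)]
  exact Finset.sum_congr rfl fun y _ => h2 y

lemma sum_secDens₂ (k n : ℕ) (hk : 0 < k) (A : Set (Fin n → Fin k)) (I J : Finset (Fin n))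
    (hIJ : Disjoint I J) (z : {j : Fin n // j ∈ J} → Fin k) :
    ∑ y : ({i : Fin n // i ∈ I} → Fin k), secDens₂ k n A I J y z
      = (k : ℝ) ^ I.card * secDens k n A J z := by
  have hcard : I.card + J.card ≤ n := by
    have h1 := Finset.card_le_univ (I ∪ J)
    rwa [Finset.card_union_of_disjoint hIJ, Fintype.card_fin] at h1
  have hk0 : (0:ℝ) < (k:ℝ) := by exact_mod_cast hk
  have hsplit : (k:ℝ) ^ (n - J.card) = (k:ℝ) ^ (n - I.card - J.card) * (k:ℝ) ^ I.card := by
    rw [← pow_add]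
    congr 1
    omega
  unfold secDens₂ secDens
  rw [← Finset.sum_div]
  rw [← Nat.cast_sum, ncard_count k n A I J z, hsplit]
  field_simp

def glueEquiv (k n : ℕ) (I J : Finset (Fin n)) (hIJ : Disjoint I J) :
    ({i : Fin n // i ∈ I ∪ J} → Fin k) ≃
      ({i : Fin n // i ∈ I} → Fin k) × ({j : Fin n // j ∈ J} → Fin k) where
  toFun w := (fun i => w ⟨i.1, Finset.mem_union_left _ i.2⟩,
              fun j => w ⟨j.1, Finset.mem_union_right _ j.2⟩)
  invFun p := fun i => if h : i.1 ∈ I then p.1 ⟨i.1, h⟩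
    else p.2 ⟨i.1, (Finset.mem_union.1 i.2).resolve_left h⟩
  left_inv w := by
    funext i
    by_cases h : i.1 ∈ I
    · simp only [dif_pos h]
    · simp only [dif_neg h]
  right_inv p := by
    refine Prod.ext ?_ ?_
    · funext i
      simp only [dif_pos i.2]
    · funext j
      have hj : j.1 ∉ I := fun hi => (Finset.disjoint_left.1 hIJ hi) j.2
      simp only [dif_neg hj]

lemma secDens_union (k n : ℕ) (A : Set (Fin n → Fin k)) (I J : Finset (Fin n))
    (hIJ : Disjoint I J) (w : {i : Fin n // i ∈ I ∪ J} → Fin k) :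
    secDens k n A (I ∪ J) w
      = secDens₂ k n A I J (glueEquiv k n I J hIJ w).1 (glueEquiv k n I J hIJ w).2 := by
  have hset : {x ∈ A | ∀ i : {i : Fin n // i ∈ I ∪ J}, x i.1 = w i} =
      {x ∈ A | (∀ i : {i : Fin n // i ∈ I}, x i.1 = (glueEquiv k n I J hIJ w).1 i) ∧
        ∀ j : {j : Fin n // j ∈ J}, x j.1 = (glueEquiv k n I J hIJ w).2 j} := by
    ext x
    simp only [Set.mem_setOf_eq, glueEquiv, Equiv.coe_fn_mk]
    constructor
    · rintro ⟨hA, hw⟩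
      exact ⟨hA, fun i => hw ⟨i.1, Finset.mem_union_left _ i.2⟩,
        fun j => hw ⟨j.1, Finset.mem_union_right _ j.2⟩⟩
    · rintro ⟨hA, h1, h2⟩
      refine ⟨hA, fun i => ?_⟩
      rcases Finset.mem_union.1 i.2 with hi | hi
      · have := h1 ⟨i.1, hi⟩
        simpa using this
      · have := h2 ⟨i.1, hi⟩
        simpa using this
  unfold secDens secDens₂
  rw [hset, Finset.card_union_of_disjoint hIJ, Nat.sub_add_eq]

lemma energy_union (k n : ℕ) (A : Set (Fin n → Fin k)) (I J : Finset (Fin n))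
    (hIJ : Disjoint I J) :
    energy k n A (I ∪ J) = (∑ y : ({i : Fin n // i ∈ I} → Fin k),
      ∑ z : ({j : Fin n // j ∈ J} → Fin k), (secDens₂ k n A I J y z) ^ 2)
      / ((k : ℝ) ^ I.card * (k : ℝ) ^ J.card) := by
  unfold energy
  rw [Finset.card_union_of_disjoint hIJ, pow_add]
  congr 1
  calc ∑ w : ({i : Fin n // i ∈ I ∪ J} → Fin k), secDens k n A (I ∪ J) w ^ 2
      = ∑ w : ({i : Fin n // i ∈ I ∪ J} → Fin k),
          (secDens₂ k n A I J (glueEquiv k n I J hIJ w).1 (glueEquiv k n I J hIJ w).2) ^ 2 :=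
        Finset.sum_congr rfl fun w _ => by rw [secDens_union k n A I J hIJ w]
    _ = ∑ p : ({i : Fin n // i ∈ I} → Fin k) × ({j : Fin n // j ∈ J} → Fin k),
          (secDens₂ k n A I J p.1 p.2) ^ 2 :=
        Equiv.sum_comp (glueEquiv k n I J hIJ)
          (fun p : ({i : Fin n // i ∈ I} → Fin k) × ({j : Fin n // j ∈ J} → Fin k) =>
            (secDens₂ k n A I J p.1 p.2) ^ 2)
    _ = ∑ y : ({i : Fin n // i ∈ I} → Fin k), ∑ z : ({j : Fin n // j ∈ J} → Fin k),
          (secDens₂ k n A I J y z) ^ 2 := Fintype.sum_prod_type _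

/-- If the energy increment `e_{I∪J}(A) - e_J(A)` is at most `ε⁴`, then for a
proportion at least `1 - ε` of the `z ∈ [k]^J` we have
`|dens(A_{(y,z)}) - dens(A_z)| ≤ ε` for every `y ∈ [k]^I`. -/
theorem energy_increment_sections (k n : ℕ) (hk : 2 ≤ k) (I J : Finset (Fin n))
    (hIJ : Disjoint I J) (A : Set (Fin n → Fin k)) (ε : ℝ) (hε0 : 0 < ε)
    (hε : ε < ((k : ℝ) ^ I.card)⁻¹)
    (h : energy k n A (I ∪ J) - energy k n A J ≤ ε ^ 4) :
    1 - ε ≤ (Set.ncard {z : {j : Fin n // j ∈ J} → Fin k |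
        ∀ y : {i : Fin n // i ∈ I} → Fin k,
          |secDens₂ k n A I J y z - secDens k n A J z| ≤ ε} : ℝ) / (k : ℝ) ^ J.card := by
  classical
  set d : ({i : Fin n // i ∈ I} → Fin k) → ({j : Fin n // j ∈ J} → Fin k) → ℝ :=
    fun y z => secDens₂ k n A I J y z with hd
  set D : ({j : Fin n // j ∈ J} → Fin k) → ℝ := fun z => secDens k n A J z with hD
  have hk0 : 0 < k := by omega
  have hkR : (0:ℝ) < (k:ℝ) := by exact_mod_cast hk0
  set cI : ℝ := (k:ℝ) ^ I.card with hcI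
  set cJ : ℝ := (k:ℝ) ^ J.card with hcJ
  have hcI0 : 0 < cI := pow_pos hkR _
  have hcJ0 : 0 < cJ := pow_pos hkR _
  have hcardY : ((Fintype.card ({i : Fin n // i ∈ I} → Fin k)) : ℝ) = cI := by
    rw [Fintype.card_fun]
    push_cast
    simp [hcI]
  have hz : ∀ z : ({j : Fin n // j ∈ J} → Fin k),
      ∑ y : ({i : Fin n // i ∈ I} → Fin k), (d y z - D z) ^ 2
        = (∑ y : ({i : Fin n // i ∈ I} → Fin k), (d y z) ^ 2) - cI * (D z) ^ 2 := by
    intro z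
    have h1 : ∑ y : ({i : Fin n // i ∈ I} → Fin k), d y z = cI * D z :=
      sum_secDens₂ k n hk0 A I J hIJ z
    have expand : ∀ y, (d y z - D z) ^ 2
        = (d y z) ^ 2 - (2 * D z) * d y z + (D z) ^ 2 := fun y => by ring
    rw [Finset.sum_congr rfl fun y _ => expand y, Finset.sum_add_distrib,
      Finset.sum_sub_distrib, ← Finset.mul_sum, h1, Finset.sum_const, nsmul_eq_mul,
      Finset.card_univ, hcardY]
    ring
  set S : ℝ := ∑ z : ({j : Fin n // j ∈ J} → Fin k),
      ∑ y : ({i : Fin n // i ∈ I} → Fin k), (d y z - D z) ^ 2 with hS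
  have hSle : S ≤ cI * cJ * ε ^ 4 := by
    have hEu := energy_union k n A I J hIJ
    have hEJ : energy k n A J = (∑ z : ({j : Fin n // j ∈ J} → Fin k), (D z) ^ 2) / cJ := rfl
    have hSeq : S = cI * cJ * (energy k n A (I ∪ J) - energy k n A J) := by
      rw [hS, Finset.sum_congr rfl fun z _ => hz z, Finset.sum_sub_distrib,
        ← Finset.mul_sum, hEu, hEJ, Finset.sum_comm]
      field_simp
      ring
    rw [hSeq]
    have := mul_le_mul_of_nonneg_left h (le_of_lt (mul_pos hcI0 hcJ0))
    linarith
  have hSnonneg0 : ∀ z ∈ (Finset.univ : Finset ({j : Fin n // j ∈ J} → Fin k)),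
      0 ≤ ∑ y : ({i : Fin n // i ∈ I} → Fin k), (d y z - D z) ^ 2 :=
    fun z _ => Finset.sum_nonneg fun y _ => sq_nonneg _
  set P : ({j : Fin n // j ∈ J} → Fin k) → Prop :=
    fun z => ∀ y : ({i : Fin n // i ∈ I} → Fin k), |d y z - D z| ≤ ε with hP
  set Bf : Finset ({j : Fin n // j ∈ J} → Fin k) := Finset.univ.filter (fun z => ¬ P z) with hBf
  set Gf : Finset ({j : Fin n // j ∈ J} → Fin k) := Finset.univ.filter P with hGf
  have hbad : ∀ z ∈ Bf, ε ^ 2 ≤ ∑ y : ({i : Fin n // i ∈ I} → Fin k), (d y z - D z) ^ 2 := by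
    intro z hzB
    simp only [hBf, hP, Finset.mem_filter, Finset.mem_univ, true_and] at hzB
    push_neg at hzB
    obtain ⟨y0, hy0⟩ := hzB
    have h1 : ε ^ 2 ≤ (d y0 z - D z) ^ 2 := by
      nlinarith [hy0.le, sq_abs (d y0 z - D z), abs_nonneg (d y0 z - D z)]
    exact h1.trans (Finset.single_le_sum (f := fun y => (d y z - D z) ^ 2)
      (fun y _ => sq_nonneg _) (Finset.mem_univ y0))
  have hBcard : (Bf.card : ℝ) * ε ^ 2 ≤ S := by
    calc (Bf.card : ℝ) * ε ^ 2 = ∑ _z ∈ Bf, ε ^ 2 := by rw [Finset.sum_const, nsmul_eq_mul]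
      _ ≤ ∑ z ∈ Bf, ∑ y : ({i : Fin n // i ∈ I} → Fin k), (d y z - D z) ^ 2 :=
          Finset.sum_le_sum hbad
      _ ≤ S := Finset.sum_le_sum_of_subset_of_nonneg (Finset.subset_univ _)
          (fun z hzu _ => hSnonneg0 z hzu)
  have hε2 : (0:ℝ) < ε ^ 2 := pow_pos hε0 2
  have hB2 : (Bf.card : ℝ) ≤ cI * cJ * ε ^ 2 := by
    have h2 : (Bf.card : ℝ) * ε ^ 2 ≤ (cI * cJ * ε ^ 2) * ε ^ 2 := by
      have := hBcard.trans hSle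
      nlinarith
    exact le_of_mul_le_mul_right h2 hε2
  have hεcI : ε * cI < 1 := by
    have h3 := mul_lt_mul_of_pos_right hε hcI0
    rwa [inv_mul_cancel₀ hcI0.ne'] at h3
  have hGB : (Gf.card : ℝ) + (Bf.card : ℝ) = cJ := by
    have h4 : Gf.card + Bf.card = Fintype.card ({j : Fin n // j ∈ J} → Fin k) := by
      rw [hGf, hBf, Finset.card_filter_add_card_filter_not, Finset.card_univ]
    have h5 : ((Fintype.card ({j : Fin n // j ∈ J} → Fin k)) : ℝ) = cJ := by
      rw [Fintype.card_fun]
      push_cast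
      simp [hcJ]
    rw [← h5]
    exact_mod_cast congrArg (Nat.cast : ℕ → ℝ) h4
  have hset : {z : {j : Fin n // j ∈ J} → Fin k |
      ∀ y : {i : Fin n // i ∈ I} → Fin k, |d y z - D z| ≤ ε} = ↑Gf := by
    ext z
    simp [hGf, hP, Set.mem_setOf_eq]
  rw [hset, Set.ncard_coe_finset]
  rw [le_div_iff₀ hcJ0]
  nlinarith [hB2, hεcI, hcJ0, hε0, hGB, mul_pos hε0 hcJ0]
end

section
/- Let k, n ∈ ℕ with k ≥ 2, let I and J be disjoint subsets of {0,…,n−1}, let A ⊆ [k]^n and let 0 < ε < k^{−|I|}. If e_{I∪J}(A) − e_J(A) ≤ ε^4 / 16, then |dens(A_y) − dens(A)| ≤ ε for every y ∈ [k]^I. -/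
section aux

open Finset

variable {k n : ℕ} {I J : Finset (Fin n)}

/-- Combine a word on `I` and a word on `J` into a word on `I ∪ J`. -/
def comb (y : {i : Fin n // i ∈ I} → Fin k) (z : {i : Fin n // i ∈ J} → Fin k) :
    {i : Fin n // i ∈ I ∪ J} → Fin k :=
  fun i => if h : i.1 ∈ I then y ⟨i.1, h⟩
    else z ⟨i.1, (Finset.mem_union.mp i.2).resolve_left h⟩

lemma comb_left (y : {i : Fin n // i ∈ I} → Fin k) (z : {i : Fin n // i ∈ J} → Fin k)
    (i : {i : Fin n // i ∈ I ∪ J}) (h : i.1 ∈ I) : comb y z i = y ⟨i.1, h⟩ :=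
  dif_pos h

lemma comb_right (hIJ : Disjoint I J) (y : {i : Fin n // i ∈ I} → Fin k)
    (z : {i : Fin n // i ∈ J} → Fin k) (i : {i : Fin n // i ∈ I ∪ J}) (h : i.1 ∈ J) :
    comb y z i = z ⟨i.1, h⟩ := by
  have hnI : i.1 ∉ I := fun hI => (Finset.disjoint_left.mp hIJ hI) h
  simp [comb, hnI]

lemma cond_iff (hIJ : Disjoint I J) (y : {i : Fin n // i ∈ I} → Fin k)
    (z : {i : Fin n // i ∈ J} → Fin k) (x : Fin n → Fin k) :
    ((∀ i : {i : Fin n // i ∈ J}, x i.1 = z i) ∧ (∀ i : {i : Fin n // i ∈ I}, x i.1 = y i)) ↔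
      ∀ i : {i : Fin n // i ∈ I ∪ J}, x i.1 = comb y z i := by
  constructor
  · rintro ⟨hJ, hI⟩ i
    by_cases h : i.1 ∈ I
    · rw [comb_left y z i h]; exact hI ⟨i.1, h⟩
    · have hj : i.1 ∈ J := (Finset.mem_union.mp i.2).resolve_left h
      rw [comb_right hIJ y z i hj]; exact hJ ⟨i.1, hj⟩
  · intro hU
    constructor
    · intro i
      have := hU ⟨i.1, Finset.mem_union_right I i.2⟩
      rwa [comb_right hIJ y z _ i.2] at this
    · intro i
      have := hU ⟨i.1, Finset.mem_union_left J i.2⟩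
      rwa [comb_left y z _ i.2] at this

lemma comb_bijective (hIJ : Disjoint I J) :
    Function.Bijective (fun p : ({i : Fin n // i ∈ I} → Fin k) × ({i : Fin n // i ∈ J} → Fin k) =>
      comb p.1 p.2) := by
  constructor
  · rintro ⟨y, z⟩ ⟨y', z'⟩ hyz
    simp only [Prod.mk.injEq]
    constructor
    · funext i
      have := congrFun hyz ⟨i.1, Finset.mem_union_left J i.2⟩
      dsimp only at this
      rwa [comb_left y z _ i.2, comb_left y' z' _ i.2] at this
    · funext i
      have := congrFun hyz ⟨i.1, Finset.mem_union_right I i.2⟩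
      dsimp only at this
      rwa [comb_right hIJ y z _ i.2, comb_right hIJ y' z' _ i.2] at this
  · intro w
    refine ⟨⟨fun i => w ⟨i.1, Finset.mem_union_left J i.2⟩,
      fun i => w ⟨i.1, Finset.mem_union_right I i.2⟩⟩, ?_⟩
    funext i
    show comb _ _ i = w i
    by_cases h : i.1 ∈ I
    · rw [comb_left _ _ i h]
    · have hj : i.1 ∈ J := (Finset.mem_union.mp i.2).resolve_left h
      rw [comb_right hIJ _ _ i hj]

lemma sum_comb (hIJ : Disjoint I J) (f : ({i : Fin n // i ∈ I ∪ J} → Fin k) → ℝ) :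
    ∑ w, f w = ∑ y : {i : Fin n // i ∈ I} → Fin k, ∑ z : {i : Fin n // i ∈ J} → Fin k,
      f (comb y z) := by
  calc ∑ w, f w
      = ∑ p : ({i : Fin n // i ∈ I} → Fin k) × ({i : Fin n // i ∈ J} → Fin k),
        f (comb p.1 p.2) :=
        (Fintype.sum_bijective _ (comb_bijective hIJ) _ _ (fun p => rfl)).symm
    _ = _ := Fintype.sum_prod_type _

end aux

section aux2
open Finset
variable {k n : ℕ} {I J : Finset (Fin n)}

lemma ncard_section_sum (hIJ : Disjoint I J) (A : Set (Fin n → Fin k))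
    (z : {i : Fin n // i ∈ J} → Fin k) :
    Set.ncard {x ∈ A | ∀ i : {i : Fin n // i ∈ J}, x i.1 = z i} =
      ∑ y : {i : Fin n // i ∈ I} → Fin k,
        Set.ncard {x ∈ A | ∀ i : {i : Fin n // i ∈ I ∪ J}, x i.1 = comb y z i} := by
  classical
  rw [Set.ncard_eq_toFinset_card', Set.toFinset_setOf]
  simp_rw [Set.ncard_eq_toFinset_card', Set.toFinset_setOf]
  refine Eq.trans (Finset.card_eq_sum_card_fiberwise
    (f := fun x => (fun i : {i : Fin n // i ∈ I} => x i.1)) (t := univ)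
    (fun x _ => mem_univ _)) ?_
  refine Finset.sum_congr rfl fun y _ => ?_
  congr 1
  rw [Finset.filter_filter]
  ext x
  simp only [mem_filter, mem_univ, true_and, funext_iff]
  constructor
  · rintro ⟨⟨hA, hJ⟩, hI⟩; exact ⟨hA, (cond_iff hIJ y z x).mp ⟨hJ, hI⟩⟩
  · rintro ⟨hA, hU⟩
    obtain ⟨hJ, hI⟩ := (cond_iff hIJ y z x).mpr hU
    exact ⟨⟨hA, hJ⟩, hI⟩

lemma ncard_section_sum' (hIJ : Disjoint I J) (A : Set (Fin n → Fin k))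
    (y : {i : Fin n // i ∈ I} → Fin k) :
    Set.ncard {x ∈ A | ∀ i : {i : Fin n // i ∈ I}, x i.1 = y i} =
      ∑ z : {i : Fin n // i ∈ J} → Fin k,
        Set.ncard {x ∈ A | ∀ i : {i : Fin n // i ∈ I ∪ J}, x i.1 = comb y z i} := by
  classical
  rw [Set.ncard_eq_toFinset_card', Set.toFinset_setOf]
  simp_rw [Set.ncard_eq_toFinset_card', Set.toFinset_setOf]
  refine Eq.trans (Finset.card_eq_sum_card_fiberwise
    (f := fun x => (fun i : {i : Fin n // i ∈ J} => x i.1)) (t := univ)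
    (fun x _ => mem_univ _)) ?_
  refine Finset.sum_congr rfl fun z _ => ?_
  congr 1
  rw [Finset.filter_filter]
  ext x
  simp only [mem_filter, mem_univ, true_and, funext_iff]
  constructor
  · rintro ⟨⟨hA, hI⟩, hJ⟩; exact ⟨hA, (cond_iff hIJ y z x).mp ⟨hJ, hI⟩⟩
  · rintro ⟨hA, hU⟩
    obtain ⟨hJ, hI⟩ := (cond_iff hIJ y z x).mpr hU
    exact ⟨⟨hA, hI⟩, hJ⟩

lemma ncard_sum (A : Set (Fin n → Fin k)) (S : Finset (Fin n)) :
    A.ncard = ∑ v : {i : Fin n // i ∈ S} → Fin k,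
        Set.ncard {x ∈ A | ∀ i : {i : Fin n // i ∈ S}, x i.1 = v i} := by
  classical
  rw [Set.ncard_eq_toFinset_card']
  simp_rw [Set.ncard_eq_toFinset_card', Set.toFinset_setOf]
  have hA : A.toFinset = univ.filter (fun x => x ∈ A) := by ext; simp
  rw [hA]
  refine Eq.trans (Finset.card_eq_sum_card_fiberwise
    (f := fun x => (fun i : {i : Fin n // i ∈ S} => x i.1)) (t := univ)
    (fun x _ => mem_univ _)) ?_
  refine Finset.sum_congr rfl fun v _ => ?_
  congr 1
  rw [Finset.filter_filter]
  ext x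
  simp [funext_iff]

end aux2

section aux3
open Finset
variable {k n : ℕ} {I J : Finset (Fin n)}

lemma sum_secDens_union (hk : (k:ℝ) ≠ 0) (hn : I.card + J.card ≤ n) (hIJ : Disjoint I J)
    (A : Set (Fin n → Fin k)) (z : {i : Fin n // i ∈ J} → Fin k) :
    ∑ y : {i : Fin n // i ∈ I} → Fin k, secDens k n A (I ∪ J) (comb y z) =
      (k:ℝ) ^ I.card * secDens k n A J z := by
  have hcard : (I ∪ J).card = I.card + J.card := Finset.card_union_of_disjoint hIJ
  unfold secDens
  rw [← Finset.sum_div, ← Nat.cast_sum, ← ncard_section_sum hIJ A z, hcard]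
  have he : n - J.card = (n - (I.card + J.card)) + I.card := by omega
  rw [he, pow_add]
  field_simp

lemma sum_secDens_union' (hk : (k:ℝ) ≠ 0) (hn : I.card + J.card ≤ n) (hIJ : Disjoint I J)
    (A : Set (Fin n → Fin k)) (y : {i : Fin n // i ∈ I} → Fin k) :
    ∑ z : {i : Fin n // i ∈ J} → Fin k, secDens k n A (I ∪ J) (comb y z) =
      (k:ℝ) ^ J.card * secDens k n A I y := by
  have hcard : (I ∪ J).card = I.card + J.card := Finset.card_union_of_disjoint hIJ
  unfold secDens
  rw [← Finset.sum_div, ← Nat.cast_sum, ← ncard_section_sum' hIJ A y, hcard]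
  have he : n - I.card = (n - (I.card + J.card)) + J.card := by omega
  rw [he, pow_add]
  field_simp

lemma sum_secDens_all (hk : (k:ℝ) ≠ 0) (A : Set (Fin n → Fin k)) (S : Finset (Fin n))
    (hS : S.card ≤ n) :
    ∑ v : {i : Fin n // i ∈ S} → Fin k, secDens k n A S v =
      (k:ℝ) ^ S.card * ((A.ncard : ℝ) / (k:ℝ) ^ n) := by
  unfold secDens
  rw [← Finset.sum_div, ← Nat.cast_sum, ← ncard_sum A S]
  rw [show (k:ℝ) ^ n = (k:ℝ) ^ (n - S.card) * (k:ℝ) ^ S.card by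
    rw [← pow_add]; congr 1; omega]
  field_simp

end aux3


set_option maxHeartbeats 1000000 in
/-- If the energy increment `e_{I∪J}(A) - e_J(A)` is at most `ε⁴/16`, then
`|dens(A_y) - dens(A)| ≤ ε` for every `y ∈ [k]^I`. -/
theorem energy_increment_density (k n : ℕ) (hk : 2 ≤ k) (I J : Finset (Fin n))
    (hIJ : Disjoint I J) (A : Set (Fin n → Fin k)) (ε : ℝ) (hε0 : 0 < ε)
    (hε : ε < ((k : ℝ) ^ I.card)⁻¹)
    (h : energy k n A (I ∪ J) - energy k n A J ≤ ε ^ 4 / 16) :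
    ∀ y : {i : Fin n // i ∈ I} → Fin k,
      |secDens k n A I y - (Set.ncard A : ℝ) / (k : ℝ) ^ n| ≤ ε := by
  intro y₀
  have hk0 : (0:ℝ) < (k:ℝ) := by exact_mod_cast Nat.lt_of_lt_of_le Nat.zero_lt_two hk
  have hkne : (k:ℝ) ≠ 0 := ne_of_gt hk0
  have hk1 : (1:ℝ) ≤ (k:ℝ) := by exact_mod_cast Nat.one_le_of_lt hk
  have hUcard : (I ∪ J).card = I.card + J.card := Finset.card_union_of_disjoint hIJ
  have hn : I.card + J.card ≤ n := by
    have h1 := Finset.card_le_univ (I ∪ J)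
    simp only [Finset.card_univ, Fintype.card_fin] at h1
    omega
  set N : ℝ := (k:ℝ) ^ I.card with hN
  set M : ℝ := (k:ℝ) ^ J.card with hM
  have hNpos : 0 < N := pow_pos hk0 _
  have hMpos : 0 < M := pow_pos hk0 _
  set dI : ℝ := secDens k n A I y₀ with hdI
  set δ : ℝ := (A.ncard : ℝ) / (k:ℝ) ^ n with hδ
  have ha : ∀ z : {i : Fin n // i ∈ J} → Fin k,
      ∑ y : {i : Fin n // i ∈ I} → Fin k, secDens k n A (I ∪ J) (comb y z) =
        N * secDens k n A J z := fun z => sum_secDens_union hkne hn hIJ A z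
  have hb : ∑ z : {i : Fin n // i ∈ J} → Fin k, secDens k n A (I ∪ J) (comb y₀ z) =
      M * dI := sum_secDens_union' hkne hn hIJ A y₀
  have hc : ∑ z : {i : Fin n // i ∈ J} → Fin k, secDens k n A J z = M * δ :=
    sum_secDens_all hkne A J (le_trans (Nat.le_add_left _ _) hn)
  have hcardI : ((Finset.univ : Finset ({i : Fin n // i ∈ I} → Fin k)).card : ℝ) = N := by
    simp [Finset.card_univ, Fintype.card_fun, Fintype.card_coe, hN]
  have hcardJ : ((Finset.univ : Finset ({i : Fin n // i ∈ J} → Fin k)).card : ℝ) = M := by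
    simp [Finset.card_univ, Fintype.card_fun, Fintype.card_coe, hM]
  -- energies
  have hEU : (N * M) * energy k n A (I ∪ J) =
      ∑ y : {i : Fin n // i ∈ I} → Fin k, ∑ z : {i : Fin n // i ∈ J} → Fin k,
        secDens k n A (I ∪ J) (comb y z) ^ 2 := by
    rw [energy, ← sum_comb hIJ (fun w => secDens k n A (I ∪ J) w ^ 2), hUcard, pow_add]
    field_simp
    rw [hN, hM]; ring
  have hEJ : M * energy k n A J =
      ∑ z : {i : Fin n // i ∈ J} → Fin k, secDens k n A J z ^ 2 := by
    rw [energy]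
    field_simp
    rw [hM]; ring
  -- variance identity
  have key : ∀ z : {i : Fin n // i ∈ J} → Fin k,
      ∑ y : {i : Fin n // i ∈ I} → Fin k,
        (secDens k n A (I ∪ J) (comb y z) - secDens k n A J z) ^ 2 =
      (∑ y : {i : Fin n // i ∈ I} → Fin k, secDens k n A (I ∪ J) (comb y z) ^ 2) -
        N * secDens k n A J z ^ 2 := by
    intro z
    have expand : ∀ y : {i : Fin n // i ∈ I} → Fin k,
        (secDens k n A (I ∪ J) (comb y z) - secDens k n A J z) ^ 2 =
          secDens k n A (I ∪ J) (comb y z) ^ 2 -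
            (2 * secDens k n A J z) * secDens k n A (I ∪ J) (comb y z) +
            secDens k n A J z ^ 2 := fun y => by ring
    rw [Finset.sum_congr rfl (fun y _ => expand y), Finset.sum_add_distrib,
      Finset.sum_sub_distrib, ← Finset.mul_sum, ha z, Finset.sum_const, nsmul_eq_mul, hcardI]
    ring
  have hvar : ∑ y : {i : Fin n // i ∈ I} → Fin k, ∑ z : {i : Fin n // i ∈ J} → Fin k,
      (secDens k n A (I ∪ J) (comb y z) - secDens k n A J z) ^ 2 =
      (N * M) * (energy k n A (I ∪ J) - energy k n A J) := by
    have hS : ∑ y : {i : Fin n // i ∈ I} → Fin k, ∑ z : {i : Fin n // i ∈ J} → Fin k,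
        (secDens k n A (I ∪ J) (comb y z) - secDens k n A J z) ^ 2 =
        (∑ y : {i : Fin n // i ∈ I} → Fin k, ∑ z : {i : Fin n // i ∈ J} → Fin k,
          secDens k n A (I ∪ J) (comb y z) ^ 2) -
          N * ∑ z : {i : Fin n // i ∈ J} → Fin k, secDens k n A J z ^ 2 := by
      rw [Finset.sum_comm, Finset.sum_congr rfl (fun z _ => key z), Finset.sum_sub_distrib,
        ← Finset.mul_sum]
      congr 1
      exact Finset.sum_comm
    linear_combination hS - hEU + N * hEJ
  -- bound the y₀ slice
  have hT : ∑ z : {i : Fin n // i ∈ J} → Fin k,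
      (secDens k n A (I ∪ J) (comb y₀ z) - secDens k n A J z) ^ 2 ≤ (N * M) * (ε ^ 4 / 16) := by
    have h1 : ∑ z : {i : Fin n // i ∈ J} → Fin k,
        (secDens k n A (I ∪ J) (comb y₀ z) - secDens k n A J z) ^ 2 ≤
        ∑ y : {i : Fin n // i ∈ I} → Fin k, ∑ z : {i : Fin n // i ∈ J} → Fin k,
          (secDens k n A (I ∪ J) (comb y z) - secDens k n A J z) ^ 2 :=
      Finset.single_le_sum
        (f := fun y : {i : Fin n // i ∈ I} → Fin k =>
          ∑ z : {i : Fin n // i ∈ J} → Fin k,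
            (secDens k n A (I ∪ J) (comb y z) - secDens k n A J z) ^ 2)
        (fun y _ => Finset.sum_nonneg fun z _ => sq_nonneg _) (Finset.mem_univ y₀)
    rw [hvar] at h1
    calc _ ≤ (N * M) * (energy k n A (I ∪ J) - energy k n A J) := h1
      _ ≤ (N * M) * (ε ^ 4 / 16) :=
        mul_le_mul_of_nonneg_left h (by positivity)
  -- Cauchy–Schwarz
  have hCS : (∑ z : {i : Fin n // i ∈ J} → Fin k,
      (secDens k n A (I ∪ J) (comb y₀ z) - secDens k n A J z)) ^ 2 ≤
      M * ∑ z : {i : Fin n // i ∈ J} → Fin k,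
        (secDens k n A (I ∪ J) (comb y₀ z) - secDens k n A J z) ^ 2 := by
    have := sq_sum_le_card_mul_sum_sq
      (s := (Finset.univ : Finset ({i : Fin n // i ∈ J} → Fin k)))
      (f := fun z => secDens k n A (I ∪ J) (comb y₀ z) - secDens k n A J z)
    rwa [hcardJ] at this
  have hsum : ∑ z : {i : Fin n // i ∈ J} → Fin k,
      (secDens k n A (I ∪ J) (comb y₀ z) - secDens k n A J z) = M * (dI - δ) := by
    rw [Finset.sum_sub_distrib, hb, hc]
    ring
  have e1 : (M * (dI - δ)) ^ 2 ≤ M * ((N * M) * (ε ^ 4 / 16)) := by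
    rw [← hsum]
    exact le_trans hCS (mul_le_mul_of_nonneg_left hT hMpos.le)
  have e2 : (dI - δ) ^ 2 ≤ N * (ε ^ 4 / 16) := by
    nlinarith [e1, sq_nonneg (dI - δ), mul_pos hMpos hMpos]
  have hNε : N * ε < 1 := by
    have := mul_lt_mul_of_pos_left hε hNpos
    rwa [mul_inv_cancel₀ (ne_of_gt hNpos)] at this
  have hε1 : ε ≤ 1 := by
    have hN1 : (1:ℝ) ≤ N := one_le_pow₀ hk1
    nlinarith [hNε]
  have t1 : N * ε * ε ^ 3 < 1 * ε ^ 3 := by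
    exact mul_lt_mul_of_pos_right hNε (by positivity)
  have t2 : ε ^ 3 ≤ ε ^ 2 := by nlinarith [mul_nonneg (sq_nonneg ε) (sub_nonneg.mpr hε1)]
  have e3 : (dI - δ) ^ 2 ≤ ε ^ 2 := by nlinarith [e2, t1, t2]
  rw [abs_le]
  constructor <;> nlinarith [e3, hε0]
end
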